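/- Let U₁,…,U_k, R₁, R₂ be d×d symmetric positive semidefinite matrices with R₂ − R₁ ⪰ 0, and suppose that for all x ∈ [α, β]^k the matrix Σᵢ xᵢUᵢ + R₂ is positive definite (where β ≥ α ≥ 0). Define f(x₁,…,x_k) = Tr((Σᵢ xᵢUᵢ + R₁)(Σᵢ xᵢUᵢ + R₂)⁻¹). Then each partial derivative ∂f/∂x_j is nonnegative on [α,β]^k, and hence f attains its minimum over [α,β]^k at (α,…,α). -/

import Mathlib

open Matrix
open scoped BigOperators

attribute [local instance] Matrix.linftyOpNormedRing Matrix.linftyOpNormedAlgebra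

section Aux

variable {n : Type*} [Fintype n] [DecidableEq n]

open scoped MatrixOrder

/-- trace of a real PSD matrix is nonnegative -/
lemma aux_trace_nonneg {A : Matrix n n ℝ} (hA : A.PosSemidef) : 0 ≤ A.trace := by
  rw [Matrix.trace]
  refine Finset.sum_nonneg fun i _ => ?_
  exact hA.diag_nonneg

/-- trace of a product of two real PSD matrices is nonnegative -/
lemma aux_trace_mul_nonneg {P Q : Matrix n n ℝ} (hP : P.PosSemidef)
    (hQ : Q.PosSemidef) : 0 ≤ (P * Q).trace := by
  have h1 : P * Q = CFC.sqrt P * CFC.sqrt P * Q := by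
    rw [← pow_two, CFC.sq_sqrt P hP.nonneg]
  have h2 : (CFC.sqrt P * Q * CFC.sqrt P).PosSemidef := by
    have := hQ.mul_mul_conjTranspose_same (CFC.sqrt P)
    rwa [(CFC.sqrt_nonneg P).posSemidef.isHermitian.eq] at this
  rw [h1, ← Matrix.trace_mul_cycle]
  exact aux_trace_nonneg h2

lemma aux_smul_psd {A : Matrix n n ℝ} (hA : A.PosSemidef) {c : ℝ} (hc : 0 ≤ c) :
    (c • A).PosSemidef := by
  refine ⟨?_, fun x => ?_⟩
  · show (c • A)ᴴ = c • A
    rw [Matrix.conjTranspose_smul, hA.1.eq, star_trivial]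
  · have h0 := hA.2 x
    exact (hA.smul hc).2 x

lemma aux_sum_psd {k : ℕ} (c : Fin k → ℝ) (hc : ∀ i, 0 ≤ c i)
    (U : Fin k → Matrix n n ℝ) (hU : ∀ i, (U i).PosSemidef) :
    (∑ i, c i • U i).PosSemidef := by
  classical
  refine Finset.sum_induction _ _ (fun a b ha hb => ha.add hb) .zero ?_
  intro i _
  exact aux_smul_psd (hU i) (hc i)

end Aux

/-- Key derivative computation. -/
lemma aux_key {d k : ℕ} (U : Fin k → Matrix (Fin d) (Fin d) ℝ)
    (R₁ R₂ : Matrix (Fin d) (Fin d) ℝ)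
    (f : (Fin k → ℝ) → ℝ)
    (hf : ∀ x, f x = ((∑ i, x i • U i + R₁) * (∑ i, x i • U i + R₂)⁻¹).trace)
    (x : Fin k → ℝ) (hx : (∑ i, x i • U i + R₂).PosDef) :
    ∃ G : (Fin k → ℝ) →L[ℝ] ℝ, HasFDerivAt f G x ∧ ∀ v : Fin k → ℝ,
      G v = ((R₂ - R₁) * (∑ i, x i • U i + R₂)⁻¹ * (∑ i, v i • U i) *
        (∑ i, x i • U i + R₂)⁻¹).trace := by
  classical
  let M := Matrix (Fin d) (Fin d) ℝ
  set A : (Fin k → ℝ) → M := fun y => ∑ i, y i • U i + R₂ with hAdef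
  -- A x is a unit
  have hdet : (A x).det ≠ 0 := hx.det_pos.ne'
  have hIsUnit : IsUnit (A x) := (Matrix.isUnit_iff_isUnit_det _).2 (isUnit_iff_ne_zero.2 hdet)
  set u : Mˣ := hIsUnit.unit with hu
  -- the linear part
  set L : (Fin k → ℝ) →L[ℝ] M :=
    ∑ i, (ContinuousLinearMap.proj i : (Fin k → ℝ) →L[ℝ] ℝ).smulRight (U i) with hLdef
  have hLval : ∀ v, L v = ∑ i, v i • U i := by
    intro v
    simp [hLdef, ContinuousLinearMap.sum_apply]
  have hA : HasFDerivAt A L x := by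
    have h1 : HasFDerivAt (fun y : Fin k → ℝ => ∑ i, y i • U i) L x := by
      rw [hLdef]
      exact HasFDerivAt.fun_sum fun i _ =>
        ((ContinuousLinearMap.proj i : (Fin k → ℝ) →L[ℝ] ℝ).hasFDerivAt).smul_const (U i)
    exact h1.add_const R₂
  -- trace ∘ mulLeft
  set Φ : M →L[ℝ] ℝ :=
    ((Matrix.traceLinearMap (Fin d) ℝ ℝ).comp
      (LinearMap.mulLeft ℝ (R₂ - R₁))).toContinuousLinearMap with hΦdef
  have hΦval : ∀ B : M, Φ B = ((R₂ - R₁) * B).trace := fun B => rfl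
  -- derivative of the inverse
  have hinv : HasFDerivAt Ring.inverse
      (-(ContinuousLinearMap.mulLeftRight ℝ M ↑u⁻¹ ↑u⁻¹)) (A x) := by
    have := hasFDerivAt_ringInverse (𝕜 := ℝ) u
    rwa [hIsUnit.unit_spec] at this
  have hcomp : HasFDerivAt (fun y => Ring.inverse (A y))
      ((-(ContinuousLinearMap.mulLeftRight ℝ M ↑u⁻¹ ↑u⁻¹)).comp L) x := hinv.comp x hA
  have h2 : HasFDerivAt (fun y => Φ (Ring.inverse (A y)))
      (Φ.comp ((-(ContinuousLinearMap.mulLeftRight ℝ M ↑u⁻¹ ↑u⁻¹)).comp L)) x :=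
    (Φ.hasFDerivAt).comp x hcomp
  have h3 : HasFDerivAt (fun y => (d : ℝ) - Φ (Ring.inverse (A y)))
      (-(Φ.comp ((-(ContinuousLinearMap.mulLeftRight ℝ M ↑u⁻¹ ↑u⁻¹)).comp L))) x :=
    h2.const_sub _
  -- eventual equality of f with this function
  have hcont : ContinuousAt (fun y => (A y).det) x := by
    have hAc : Continuous A := by
      apply Continuous.add _ continuous_const
      exact continuous_finset_sum _ fun i _ => ((continuous_apply i).smul continuous_const)
    exact (Continuous.matrix_det hAc).continuousAt
  have hev : ∀ᶠ y in nhds x, (A y).det ≠ 0 := hcont.eventually_ne hdet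
  have heq : f =ᶠ[nhds x] fun y => (d : ℝ) - Φ (Ring.inverse (A y)) := by
    filter_upwards [hev] with y hy
    have hyu : IsUnit (A y) := (Matrix.isUnit_iff_isUnit_det _).2 (isUnit_iff_ne_zero.2 hy)
    have h4 : ∑ i, y i • U i + R₁ = A y - (R₂ - R₁) := by
      show _ = ∑ i, y i • U i + R₂ - (R₂ - R₁)
      abel
    rw [hf y, hΦval, ← Matrix.nonsing_inv_eq_ringInverse]
    show ((∑ i, y i • U i + R₁) * (A y)⁻¹).trace = (d : ℝ) - ((R₂ - R₁) * (A y)⁻¹).trace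
    rw [h4, Matrix.sub_mul, Matrix.mul_nonsing_inv _ ((Matrix.isUnit_iff_isUnit_det _).1 hyu)]
    rw [Matrix.trace_sub, Matrix.trace_one]
    simp
  refine ⟨_, h3.congr_of_eventuallyEq heq, fun v => ?_⟩
  have hB : (↑u⁻¹ : M) = (A x)⁻¹ := by
    rw [Matrix.coe_units_inv, hIsUnit.unit_spec]
  change -(Φ (-((↑u⁻¹ : M) * L v * (↑u⁻¹ : M)))) = _
  simp only [ContinuousLinearMap.neg_apply, ContinuousLinearMap.comp_apply,
    ContinuousLinearMap.mulLeftRight_apply, hΦval, hLval, hB]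
  rw [show (R₂ - R₁) * -((∑ i, x i • U i + R₂)⁻¹ * (∑ i, v i • U i) *
      (∑ i, x i • U i + R₂)⁻¹) = -((R₂ - R₁) * (∑ i, x i • U i + R₂)⁻¹ *
      (∑ i, v i • U i) * (∑ i, x i • U i + R₂)⁻¹) by noncomm_ring]
  rw [Matrix.trace_neg, neg_neg]

/-- Let `U₁,…,U_k, R₁, R₂` be `d×d` PSD matrices with `R₂ − R₁ ⪰ 0`, such that
`Σᵢ xᵢUᵢ + R₂ ≻ 0` for all `x ∈ [α,β]^k` (where `β ≥ α ≥ 0`).  Let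
`f(x) = Tr((Σᵢ xᵢUᵢ + R₁)(Σᵢ xᵢUᵢ + R₂)⁻¹)`.  Then every partial derivative of
`f` is nonnegative on the cube `[α,β]^k`, and `f` attains its minimum over the
cube at `(α,…,α)`. -/
theorem trace_ratio_monotone {d k : ℕ} (α β : ℝ) (hα : 0 ≤ α) (hαβ : α ≤ β)
    (U : Fin k → Matrix (Fin d) (Fin d) ℝ) (R₁ R₂ : Matrix (Fin d) (Fin d) ℝ)
    (hU : ∀ i, (U i).PosSemidef) (hR₁ : R₁.PosSemidef) (hR₂ : R₂.PosSemidef)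
    (hR : (R₂ - R₁).PosSemidef)
    (hPD : ∀ x : Fin k → ℝ, (∀ i, x i ∈ Set.Icc α β) →
      (∑ i, x i • U i + R₂).PosDef)
    (f : (Fin k → ℝ) → ℝ)
    (hf : ∀ x, f x = ((∑ i, x i • U i + R₁) * (∑ i, x i • U i + R₂)⁻¹).trace) :
    (∀ x : Fin k → ℝ, (∀ i, x i ∈ Set.Icc α β) →
        ∀ j, 0 ≤ fderiv ℝ f x (Pi.single j 1)) ∧
      (∀ x : Fin k → ℝ, (∀ i, x i ∈ Set.Icc α β) → f (fun _ => α) ≤ f x) := by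
  classical
  -- general nonnegativity of the derivative value in direction v ≥ 0
  have main : ∀ (x : Fin k → ℝ), (∑ i, x i • U i + R₂).PosDef →
      ∀ v : Fin k → ℝ, (∀ i, 0 ≤ v i) →
      0 ≤ ((R₂ - R₁) * (∑ i, x i • U i + R₂)⁻¹ * (∑ i, v i • U i) *
        (∑ i, x i • U i + R₂)⁻¹).trace := by
    intro x hx v hv
    set B := (∑ i, x i • U i + R₂)⁻¹ with hBdef
    have hBpd : B.PosDef := hx.inv
    have hBh : Bᴴ = B := hBpd.1.eq
    have hM : (∑ i, v i • U i).PosSemidef := aux_sum_psd v hv U hU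
    have h1 : (B * (∑ i, v i • U i) * B).PosSemidef := by
      have := hM.mul_mul_conjTranspose_same B
      rwa [hBh] at this
    have h2 : (R₂ - R₁) * B * (∑ i, v i • U i) * B =
        (R₂ - R₁) * (B * (∑ i, v i • U i) * B) := by noncomm_ring
    rw [h2]
    exact aux_trace_mul_nonneg hR h1
  constructor
  · intro x hx j
    obtain ⟨G, hG, hGv⟩ := aux_key U R₁ R₂ f hf x (hPD x hx)
    rw [hG.fderiv, hGv]
    have hsingle : ∑ i, (Pi.single j 1 : Fin k → ℝ) i • U i = ∑ i,
        (fun i => if i = j then (1:ℝ) else 0) i • U i := by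
      congr 1; ext i; congr 1; simp [Pi.single_apply]
    have honehot : ∀ i : Fin k, 0 ≤ (fun i => if i = j then (1:ℝ) else 0) i := by
      intro i; dsimp only; split <;> norm_num
    rw [hsingle]
    exact main x (hPD x hx) _ honehot
  · intro x hx
    set v : Fin k → ℝ := fun i => x i - α with hvdef
    have hv : ∀ i, 0 ≤ v i := fun i => by
      have := (hx i).1; simp [hvdef]; linarith
    set γ : ℝ → (Fin k → ℝ) := fun t => (fun _ => α) + t • v with hγdef
    have hγmem : ∀ t ∈ Set.Icc (0:ℝ) 1, ∀ i, γ t i ∈ Set.Icc α β := by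
      intro t ht i
      have h1 := (hx i).1
      have h2 := (hx i).2
      have hv1 : 0 ≤ t * v i := mul_nonneg ht.1 (hv i)
      have hv2 : t * v i ≤ v i := by
        nlinarith [hv i, ht.2]
      constructor
      · simp [hγdef]; linarith
      · simp [hγdef, hvdef] at *; nlinarith
    -- derivative of g = f ∘ γ
    have hγd : ∀ t : ℝ, HasDerivAt γ v t := by
      intro t
      have h1 : HasDerivAt (fun s : ℝ => s • v) ((1:ℝ) • v) t :=
        (hasDerivAt_id t).smul_const v
      have h2 := h1.const_add (fun _ => α : Fin k → ℝ)
      simpa [hγdef] using h2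
    have hg : ∀ t ∈ Set.Icc (0:ℝ) 1, HasDerivAt (f ∘ γ)
        (((R₂ - R₁) * (∑ i, γ t i • U i + R₂)⁻¹ * (∑ i, v i • U i) *
          (∑ i, γ t i • U i + R₂)⁻¹).trace) t := by
      intro t ht
      obtain ⟨G, hG, hGv⟩ := aux_key U R₁ R₂ f hf (γ t) (hPD (γ t) (hγmem t ht))
      have := hG.comp_hasDerivAt t (hγd t)
      rwa [hGv v] at this
    have hmono : MonotoneOn (f ∘ γ) (Set.Icc (0:ℝ) 1) := by
      apply monotoneOn_of_deriv_nonneg (convex_Icc 0 1)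
      · exact fun t ht => ((hg t ht).continuousAt).continuousWithinAt
      · intro t ht
        rw [interior_Icc] at ht
        exact ((hg t (Set.mem_Icc_of_Ioo ht)).differentiableAt).differentiableWithinAt
      · intro t ht
        rw [interior_Icc] at ht
        rw [(hg t (Set.mem_Icc_of_Ioo ht)).deriv]
        exact main (γ t) (hPD (γ t) (hγmem t (Set.mem_Icc_of_Ioo ht))) v hv
    have h01 : (f ∘ γ) 0 ≤ (f ∘ γ) 1 :=
      hmono (Set.mem_Icc.2 ⟨le_refl 0, zero_le_one⟩) (Set.mem_Icc.2 ⟨zero_le_one, le_refl 1⟩)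
        zero_le_one
    have hγ0 : γ 0 = fun _ => α := by ext i; simp [hγdef]
    have hγ1 : γ 1 = x := by ext i; simp [hγdef, hvdef]
    rwa [Function.comp_apply, Function.comp_apply, hγ0, hγ1] at h01
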